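/- Energy stability of the semi-implicit projection step for the incompressible Euler equations: let n, m : ℕ, let D : Matrix (Fin n) (Fin n) ℝ be positive definite, let K : Matrix (Fin m) (Fin n) ℝ be any matrix, and let ρ, Δt : ℝ with ρ > 0. Suppose v₁, v⋆ : Fin n → ℝ and p : Fin m → ℝ satisfy ρ • (D *ᵥ v₁) = ρ • (D *ᵥ v⋆) − Δt • (Kᵀ *ᵥ p) (the discrete momentum update) and K *ᵥ v₁ = 0 (the discrete divergence-free condition). Then the kinetic energy does not increase: v₁ ⬝ᵥ (D *ᵥ v₁) ≤ v⋆ ⬝ᵥ (D *ᵥ v⋆). -/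

import Mathlib

open Matrix

/-- Energy stability of the semi-implicit projection step for the
incompressible Euler equations. -/
theorem projection_step_energy_stability
    (n m : ℕ)
    (D : Matrix (Fin n) (Fin n) ℝ) (hD : D.PosDef)
    (K : Matrix (Fin m) (Fin n) ℝ) (ρ Δt : ℝ) (hρ : 0 < ρ)
    (v₁ vstar : Fin n → ℝ) (p : Fin m → ℝ)
    (h1 : ρ • (D *ᵥ v₁) = ρ • (D *ᵥ vstar) - Δt • (Kᵀ *ᵥ p))
    (h2 : K *ᵥ v₁ = 0) :
    v₁ ⬝ᵥ (D *ᵥ v₁) ≤ vstar ⬝ᵥ (D *ᵥ vstar) := by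
  have hsym : Dᵀ = D := hD.1
  -- v₁ ⬝ (Kᵀ *ᵥ p) = 0
  have hKp : v₁ ⬝ᵥ (Kᵀ *ᵥ p) = 0 := by
    rw [dotProduct_mulVec, vecMul_transpose, h2, zero_dotProduct]
  -- dot h1 with v₁
  have h1' : ρ * (v₁ ⬝ᵥ (D *ᵥ v₁)) = ρ * (v₁ ⬝ᵥ (D *ᵥ vstar)) := by
    have := congrArg (fun w => v₁ ⬝ᵥ w) h1
    simpa [dotProduct_sub, dotProduct_smul, hKp, smul_eq_mul] using this
  have hmid : v₁ ⬝ᵥ (D *ᵥ v₁) = v₁ ⬝ᵥ (D *ᵥ vstar) :=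
    mul_left_cancel₀ hρ.ne' h1'
  -- symmetry: vstar ⬝ D v₁ = v₁ ⬝ D vstar
  have hsymd : vstar ⬝ᵥ (D *ᵥ v₁) = v₁ ⬝ᵥ (D *ᵥ vstar) := by
    rw [dotProduct_mulVec, show vstar ᵥ* D = D *ᵥ vstar by
      rw [← hsym, vecMul_transpose, hsym], dotProduct_comm]
  have hpos : 0 ≤ (vstar - v₁) ⬝ᵥ (D *ᵥ (vstar - v₁)) :=
    by have := hD.posSemidef.dotProduct_mulVec_nonneg (vstar - v₁); rwa [star_trivial] at this
  have hexp : (vstar - v₁) ⬝ᵥ (D *ᵥ (vstar - v₁))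
      = vstar ⬝ᵥ (D *ᵥ vstar) - v₁ ⬝ᵥ (D *ᵥ v₁) := by
    rw [mulVec_sub, dotProduct_sub, sub_dotProduct, sub_dotProduct]
    rw [hsymd]
    linarith [hmid]
  linarith [hexp ▸ hpos]
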